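/- Let N ≥ 1 and let K ⊆ ℂ^N be a compact, circled, regular set. Then V_K(z) = max(0, ρ_K(z)) for every z ∈ ℂ^N. -/

import Mathlib

open MeasureTheory Filter Topology

noncomputable section

variable (N : ℕ)

/-- The set of competitors `(1/deg p) log |p(z)|` in the definition of the extremal
function of `K ⊆ ℂ^N`. -/
def candSet (K : Set (Fin N → ℂ)) (z : Fin N → ℂ) : Set ℝ :=
  {v | ∃ p : MvPolynomial (Fin N) ℂ, 1 ≤ p.totalDegree ∧
      (∀ x ∈ K, ‖MvPolynomial.eval x p‖ ≤ 1) ∧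
      v = (p.totalDegree : ℝ)⁻¹ * Real.log ‖MvPolynomial.eval z p‖}

/-- The (pluricomplex) extremal function `V_K`. -/
def VK (K : Set (Fin N → ℂ)) (z : Fin N → ℂ) : ℝ :=
  max 0 (sSup (candSet N K z))

/-- `K` is regular: `V_K` is finite and continuous. -/
def Regular (K : Set (Fin N → ℂ)) : Prop :=
  (∀ z, BddAbove (candSet N K z)) ∧ Continuous (VK N K)

/-- `K` is circled. -/
def Circled (K : Set (Fin N → ℂ)) : Prop :=
  ∀ z ∈ K, ∀ t : ℝ, (Complex.exp (t * Complex.I)) • z ∈ K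

/-- The Robin function of `K`, with values in `[-∞, ∞)` (here `EReal`). -/
def robin (K : Set (Fin N → ℂ)) (z : Fin N → ℂ) : EReal :=
  Filter.limsup
    (fun l : ℂ => ((VK N K (l • z) - Real.log ‖l‖ : ℝ) : EReal))
    (Filter.comap (fun l : ℂ => ‖l‖) Filter.atTop)

open MvPolynomial

/-- homogeneous competitors with nonvanishing value -/
def homCand (K : Set (Fin N → ℂ)) (z : Fin N → ℂ) : Set ℝ :=
  {v | ∃ (j : ℕ) (p : MvPolynomial (Fin N) ℂ), 1 ≤ j ∧ p.IsHomogeneous j ∧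
      (∀ x ∈ K, ‖MvPolynomial.eval x p‖ ≤ 1) ∧
      MvPolynomial.eval z p ≠ 0 ∧
      v = (j : ℝ)⁻¹ * Real.log (‖MvPolynomial.eval z p‖)}

lemma eval_smul_of_isHom {p : MvPolynomial (Fin N) ℂ} {n : ℕ} (hp : p.IsHomogeneous n)
    (c : ℂ) (x : Fin N → ℂ) : eval (c • x) p = c ^ n * eval x p := by
  rw [eval_eq, eval_eq, Finset.mul_sum]
  refine Finset.sum_congr rfl fun d hd => ?_
  have hdeg : (d.sum fun _ e => e) = n := by
    have := hp (MvPolynomial.mem_support_iff.mp hd)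
    simpa [Finsupp.weight_apply, Finsupp.sum] using this
  have : ∏ i ∈ d.support, (c • x) i ^ d i
      = c ^ n * ∏ i ∈ d.support, x i ^ d i := by
    simp only [Pi.smul_apply, smul_eq_mul, mul_pow]
    rw [Finset.prod_mul_distrib, Finset.prod_pow_eq_pow_sum]
    congr 1
    exact congrArg (c ^ ·) (by simpa [Finsupp.sum] using hdeg)
  rw [this]; ring

lemma homCand_subset (K : Set (Fin N → ℂ)) (z : Fin N → ℂ) :
    homCand N K z ⊆ candSet N K z := by
  rintro v ⟨j, p, hj, hp, hb, hne, rfl⟩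
  have hp0 : p ≠ 0 := fun h => hne (by simp [h])
  have htd : p.totalDegree = j := hp.totalDegree hp0
  exact ⟨p, by rw [htd]; exact hj, hb, by rw [htd]⟩

lemma component_bound {K : Set (Fin N → ℂ)} (hcirc : Circled N K)
    {q : MvPolynomial (Fin N) ℂ} (hq : ∀ x ∈ K, ‖eval x q‖ ≤ 1)
    (j : ℕ) {x : Fin N → ℂ} (hx : x ∈ K) :
    ‖eval x (homogeneousComponent j q)‖ ≤ 1 := by
  set D := q.totalDegree with hD
  rcases lt_or_ge D j with h | hj
  · rw [homogeneousComponent_eq_zero j q h]; simp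
  set n : ℕ := D + j + 1 with hn
  have hn0 : n ≠ 0 := by omega
  have hnpos : (0:ℝ) < n := by positivity
  set ω : ℂ := Complex.exp (((2 * Real.pi / n : ℝ) : ℂ) * Complex.I) with hω
  have hprim : IsPrimitiveRoot ω n := by
    have := Complex.isPrimitiveRoot_exp n hn0
    convert this using 2
    push_cast
    ring
  have habs : ∀ m : ℕ, ‖ω ^ m‖ = 1 := by
    intro m
    rw [norm_pow]
    rw [hω, Complex.norm_exp_ofReal_mul_I]
    simp
  have hmem : ∀ k : ℕ, (ω ^ k) • x ∈ K := by
    intro k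
    have : ω ^ k = Complex.exp (((2 * Real.pi * k / n : ℝ) : ℂ) * Complex.I) := by
      rw [hω, ← Complex.exp_nat_mul]
      congr 1; push_cast; ring
    rw [this]; exact hcirc x hx _
  have expand : ∀ k : ℕ, eval ((ω ^ k) • x) q
      = ∑ i ∈ Finset.range (D + 1), (ω ^ k) ^ i * eval x (homogeneousComponent i q) := by
    intro k
    conv_lhs => rw [← sum_homogeneousComponent q]
    rw [map_sum]
    exact Finset.sum_congr rfl fun i _ =>
      eval_smul_of_isHom N (homogeneousComponent_isHomogeneous i q) _ x
  have key : (n : ℂ) * eval x (homogeneousComponent j q)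
      = ∑ k ∈ Finset.range n, ω ^ (k * (D + 1)) * eval ((ω ^ k) • x) q := by
    have swap : ∑ k ∈ Finset.range n, ω ^ (k * (D + 1)) * eval ((ω ^ k) • x) q
        = ∑ i ∈ Finset.range (D + 1),
            (∑ k ∈ Finset.range n, (ω ^ (D + 1 + i)) ^ k) * eval x (homogeneousComponent i q) := by
      simp_rw [expand, Finset.mul_sum]
      rw [Finset.sum_comm]
      refine Finset.sum_congr rfl fun i _ => ?_
      rw [Finset.sum_mul]
      refine Finset.sum_congr rfl fun k _ => ?_
      rw [← mul_assoc, ← pow_mul, ← pow_mul, ← pow_add]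
      ring_nf
    rw [swap]
    rw [Finset.sum_eq_single_of_mem j (Finset.mem_range.mpr (by omega))]
    · congr 1
      have : ω ^ (D + 1 + j) = 1 := by
        have : D + 1 + j = n := by omega
        rw [this, hprim.pow_eq_one]
      simp [this]
    · intro i hi hij
      have hi' : i < D + 1 := Finset.mem_range.mp hi
      have hζn : (ω ^ (D + 1 + i)) ^ n = 1 := by
        rw [← pow_mul, mul_comm, pow_mul, hprim.pow_eq_one, one_pow]
      have hζ1 : ω ^ (D + 1 + i) ≠ 1 := by
        intro h
        obtain ⟨c, hc⟩ := (hprim.pow_eq_one_iff_dvd (D + 1 + i)).mp h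
        rcases Nat.lt_or_ge c 2 with h2 | h2
        · interval_cases c <;> omega
        · have h3 : n * 2 ≤ n * c := Nat.mul_le_mul_left n h2
          omega
      have : ∑ k ∈ Finset.range n, (ω ^ (D + 1 + i)) ^ k = 0 := by
        rw [geom_sum_eq hζ1, hζn]
        simp
      rw [this, zero_mul]
  have hsum : ‖∑ k ∈ Finset.range n, ω ^ (k * (D + 1)) * eval ((ω ^ k) • x) q‖
      ≤ n := by
    calc ‖∑ k ∈ Finset.range n, ω ^ (k * (D + 1)) * eval ((ω ^ k) • x) q‖
        ≤ ∑ k ∈ Finset.range n, ‖ω ^ (k * (D + 1)) * eval ((ω ^ k) • x) q‖ := by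
          exact norm_sum_le _ _
      _ ≤ ∑ k ∈ Finset.range n, 1 := by
          refine Finset.sum_le_sum fun k _ => ?_
          rw [norm_mul, habs, one_mul]
          exact hq _ (hmem k)
      _ = n := by simp
  have := key ▸ hsum
  rw [norm_mul, Complex.norm_natCast] at this
  calc ‖eval x (homogeneousComponent j q)‖
      = (n * ‖eval x (homogeneousComponent j q)‖) / n := by field_simp
    _ ≤ n / n := by gcongr
    _ = 1 := by field_simp


lemma eval_le {K : Set (Fin N → ℂ)} (hKne : K.Nonempty) (hcirc : Circled N K)
    {z : Fin N → ℂ} (hbdd : BddAbove (candSet N K z))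
    {q : MvPolynomial (Fin N) ℂ} (hq : ∀ x ∈ K, ‖eval x q‖ ≤ 1) :
    ‖eval z q‖ ≤ (q.totalDegree + 1) *
      Real.exp (q.totalDegree * max 0 (sSup (homCand N K z))) := by
  set M : ℝ := max 0 (sSup (homCand N K z)) with hM
  have hM0 : 0 ≤ M := le_max_left _ _
  set D := q.totalDegree with hD
  have hcomp : ∀ i, ‖eval z (homogeneousComponent i q)‖ ≤ Real.exp (i * M) := by
    intro i
    rcases Nat.eq_zero_or_pos i with hi0 | hipos
    · subst hi0
      obtain ⟨x0, hx0⟩ := hKne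
      have h1 : ‖eval x0 (homogeneousComponent 0 q)‖ ≤ 1 :=
        component_bound N hcirc hq 0 hx0
      rw [homogeneousComponent_zero] at h1 ⊢
      simpa using h1
    · rcases eq_or_ne (eval z (homogeneousComponent i q)) 0 with h0 | h0
      · rw [h0]; simpa using (Real.exp_pos _).le
      · have hmem : (i : ℝ)⁻¹ * Real.log (‖eval z (homogeneousComponent i q)‖)
            ∈ homCand N K z :=
          ⟨i, homogeneousComponent i q, hipos, homogeneousComponent_isHomogeneous i q,
            fun x hx => component_bound N hcirc hq i hx, h0, rfl⟩
        have hle : (i : ℝ)⁻¹ * Real.log (‖eval z (homogeneousComponent i q)‖) ≤ M :=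
          le_trans (le_csSup (hbdd.mono (homCand_subset N K z)) hmem) (le_max_right _ _)
        have hipos' : (0:ℝ) < i := by exact_mod_cast hipos
        have hlog : Real.log (‖eval z (homogeneousComponent i q)‖) ≤ i * M := by
          have := mul_le_mul_of_nonneg_left hle hipos'.le
          rwa [← mul_assoc, mul_inv_cancel₀ hipos'.ne', one_mul] at this
        have habs0 : 0 < ‖eval z (homogeneousComponent i q)‖ :=
          norm_pos_iff.mpr h0
        exact (Real.log_le_iff_le_exp habs0).mp hlog
  calc ‖eval z q‖
      = ‖eval z (∑ i ∈ Finset.range (D + 1), homogeneousComponent i q)‖ := by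
        rw [sum_homogeneousComponent]
    _ ≤ ∑ i ∈ Finset.range (D + 1), ‖eval z (homogeneousComponent i q)‖ := by
        rw [map_sum]; exact norm_sum_le _ _
    _ ≤ ∑ i ∈ Finset.range (D + 1), Real.exp (D * M) := by
        refine Finset.sum_le_sum fun i hi => le_trans (hcomp i) ?_
        have : (i : ℝ) ≤ D := by exact_mod_cast Nat.lt_succ_iff.mp (Finset.mem_range.mp hi)
        exact Real.exp_le_exp.mpr (by nlinarith)
    _ = (D + 1) * Real.exp (D * M) := by
        rw [Finset.sum_const, Finset.card_range]; ring

lemma VK_eq {K : Set (Fin N → ℂ)} (hKne : K.Nonempty) (hcirc : Circled N K)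
    (hreg : Regular N K) (z : Fin N → ℂ) :
    VK N K z = max 0 (sSup (homCand N K z)) := by
  set M : ℝ := max 0 (sSup (homCand N K z)) with hM
  have hM0 : 0 ≤ M := le_max_left _ _
  refine le_antisymm ?_ ?_
  · rw [VK, max_le_iff]
    refine ⟨hM0, Real.sSup_le ?_ hM0⟩
    rintro v ⟨p, hd, hp, rfl⟩
    set d := p.totalDegree with hdd
    have hdpos : (0:ℝ) < d := by exact_mod_cast hd
    rcases eq_or_ne (eval z p) 0 with h0 | h0
    · rw [h0]; simpa using hM0
    have habs0 : 0 < ‖eval z p‖ := norm_pos_iff.mpr h0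
    refine le_of_forall_pos_le_add fun ε hε => ?_
    -- choose k with log (k*d+1) ≤ ε * (k*d)
    obtain ⟨X, hX⟩ := Filter.eventually_atTop.mp
      ((Real.isLittleO_log_id_atTop.bound (half_pos hε)).filter_mono le_rfl)
    obtain ⟨k0, hk0⟩ := exists_nat_ge (max X 2)
    set k : ℕ := k0 + 2 with hk
    have hk1 : 1 ≤ k := by omega
    have hkd1 : (2:ℝ) ≤ (k*d : ℕ) + 1 := by
      have : (2:ℕ) ≤ k * d + 1 := by
        have := Nat.mul_le_mul (by omega : 1 ≤ k) hd
        omega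
      exact_mod_cast this
    have hX' : X ≤ ((k*d : ℕ) : ℝ) + 1 := by
      calc X ≤ max X 2 := le_max_left _ _
        _ ≤ k0 := hk0
        _ ≤ ((k*d:ℕ):ℝ) + 1 := by
            have : k0 ≤ k * d := by
              calc k0 ≤ k := by omega
                _ = k * 1 := (mul_one k).symm
                _ ≤ k * d := Nat.mul_le_mul le_rfl hd
            exact_mod_cast Nat.le_succ_of_le this
    have hlogk : Real.log ((k*d:ℕ) + 1) ≤ ε * (k*d:ℕ) := by
      have h1 := hX _ hX'
      rw [Real.norm_eq_abs, Real.norm_eq_abs] at h1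
      have h2 : Real.log ((k*d:ℕ)+1) ≤ ε/2 * ((k*d:ℕ)+1) := by
        calc Real.log ((k*d:ℕ)+1) ≤ |Real.log ((k*d:ℕ)+1)| := le_abs_self _
          _ ≤ ε/2 * |id ((k*d:ℕ)+1 : ℝ)| := h1
          _ = ε/2 * ((k*d:ℕ)+1) := by rw [id, abs_of_nonneg (by linarith)]
      calc Real.log ((k*d:ℕ)+1) ≤ ε/2 * ((k*d:ℕ)+1) := h2
        _ ≤ ε/2 * (2 * (k*d:ℕ)) := by
            have : ((k*d:ℕ):ℝ) + 1 ≤ 2 * (k*d:ℕ) := by linarith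
            nlinarith [half_pos hε]
        _ = ε * (k*d:ℕ) := by ring
    -- apply eval_le to p^k
    have hq : ∀ x ∈ K, ‖eval x (p ^ k)‖ ≤ 1 := by
      intro x hx
      rw [map_pow, norm_pow]
      exact pow_le_one₀ (norm_nonneg _) (hp x hx)
    have hev := eval_le N hKne hcirc (hreg.1 z) hq
    have hDle : (p ^ k).totalDegree ≤ k * d := totalDegree_pow p k
    have hev2 : ‖eval z p‖ ^ k ≤ ((k*d:ℕ) + 1) * Real.exp ((k*d:ℕ) * M) := by
      rw [map_pow, norm_pow] at hev
      calc ‖eval z p‖ ^ k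
          ≤ ((p^k).totalDegree + 1) * Real.exp ((p^k).totalDegree * M) := hev
        _ ≤ ((k*d:ℕ) + 1) * Real.exp ((k*d:ℕ) * M) := by
            have h1 : ((p^k).totalDegree : ℝ) ≤ (k*d:ℕ) := by exact_mod_cast hDle
            have h2 : Real.exp ((p^k).totalDegree * M) ≤ Real.exp ((k*d:ℕ) * M) :=
              Real.exp_le_exp.mpr (by nlinarith)
            have h3 : (0:ℝ) < Real.exp ((p^k).totalDegree * M) := Real.exp_pos _
            nlinarith [Real.exp_pos ((k*d:ℕ) * M)]
    have hklog : (k:ℝ) * Real.log (‖eval z p‖) ≤ Real.log ((k*d:ℕ)+1) + (k*d:ℕ) * M := by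
      have hpowpos : 0 < ‖eval z p‖ ^ k := pow_pos habs0 k
      have := Real.log_le_log hpowpos hev2
      rwa [Real.log_pow, Real.log_mul (by linarith) (Real.exp_ne_zero _), Real.log_exp] at this
    have hkpos : (0:ℝ) < k := by exact_mod_cast hk1
    have : Real.log (‖eval z p‖) ≤ d * (M + ε) := by
      have hkd : ((k*d:ℕ):ℝ) = k * d := by push_cast; ring
      rw [hkd] at hklog hlogk
      nlinarith
    calc (d:ℝ)⁻¹ * Real.log (‖eval z p‖) ≤ (d:ℝ)⁻¹ * (d * (M+ε)) := by
          have : (0:ℝ) ≤ (d:ℝ)⁻¹ := by positivity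
          nlinarith
      _ = M + ε := by field_simp
  · rw [VK]
    refine max_le (le_max_left _ _) (Real.sSup_le ?_ (le_max_left _ _))
    intro v hv
    exact le_max_of_le_right (le_csSup (hreg.1 z) (homCand_subset N K z hv))


lemma homCand_smul {K : Set (Fin N → ℂ)} {c : ℂ} (hc : c ≠ 0) (z : Fin N → ℂ) :
    homCand N K (c • z) = (fun v => v + Real.log (‖c‖)) '' homCand N K z := by
  have habsc : ‖c‖ ≠ 0 := norm_ne_zero_iff.mpr hc
  ext v
  constructor
  · rintro ⟨j, p, hj, hp, hb, hne, rfl⟩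
    have hev : eval (c • z) p = c ^ j * eval z p := eval_smul_of_isHom N hp c z
    have hz : eval z p ≠ 0 := by
      intro h; rw [hev, h, mul_zero] at hne; exact hne rfl
    refine ⟨(j:ℝ)⁻¹ * Real.log (‖eval z p‖), ⟨j, p, hj, hp, hb, hz, rfl⟩, ?_⟩
    have hjpos : (0:ℝ) < j := by exact_mod_cast hj
    rw [hev, norm_mul, norm_pow,
      Real.log_mul (pow_ne_zero _ habsc) (norm_ne_zero_iff.mpr hz), Real.log_pow]
    field_simp
    ring
  · rintro ⟨w, ⟨j, p, hj, hp, hb, hz, rfl⟩, rfl⟩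
    have hev : eval (c • z) p = c ^ j * eval z p := eval_smul_of_isHom N hp c z
    have hne : eval (c • z) p ≠ 0 := by
      rw [hev]; exact mul_ne_zero (pow_ne_zero _ hc) hz
    refine ⟨j, p, hj, hp, hb, hne, ?_⟩
    have hjpos : (0:ℝ) < j := by exact_mod_cast hj
    rw [hev, norm_mul, norm_pow,
      Real.log_mul (pow_ne_zero _ habsc) (norm_ne_zero_iff.mpr hz), Real.log_pow]
    field_simp
    ring

lemma sSup_image_add (s : Set ℝ) (hs : s.Nonempty) (hb : BddAbove s) (c : ℝ) :
    sSup ((fun v => v + c) '' s) = sSup s + c := by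
  have hbimg : BddAbove ((fun v => v + c) '' s) := by
    obtain ⟨B, hB⟩ := hb
    exact ⟨B + c, by rintro _ ⟨x, hx, rfl⟩; exact (add_le_add_iff_right c).mpr (hB hx)⟩
  refine le_antisymm (csSup_le (hs.image _) ?_) ?_
  · rintro _ ⟨x, hx, rfl⟩
    exact (add_le_add_iff_right c).mpr (le_csSup hb hx)
  · have : sSup s ≤ sSup ((fun v => v + c) '' s) - c := by
      refine csSup_le hs fun x hx => ?_
      have h2 : x + c ≤ sSup ((fun v => v + c) '' s) := le_csSup hbimg ⟨x, hx, rfl⟩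
      linarith
    linarith

lemma K_nonempty (hN : 1 ≤ N) {K : Set (Fin N → ℂ)} (hreg : Regular N K) : K.Nonempty := by
  by_contra h
  rw [Set.not_nonempty_iff_eq_empty] at h
  obtain ⟨b, hb⟩ := hreg.1 0
  obtain ⟨n, hn⟩ := exists_nat_gt (max (Real.exp b) 1)
  set i0 : Fin N := ⟨0, hN⟩
  have htd : (X i0 + C (n:ℂ) : MvPolynomial (Fin N) ℂ).totalDegree = 1 := by
    refine le_antisymm ?_ ?_
    · refine le_trans (totalDegree_add _ _) ?_
      rw [totalDegree_X, totalDegree_C]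
      simp
    · have hco : coeff (Finsupp.single i0 1) (X i0 + C (n:ℂ) : MvPolynomial (Fin N) ℂ) = 1 := by
        rw [coeff_add, coeff_X, coeff_C, if_neg (fun hh : (0 : Fin N →₀ ℕ) = Finsupp.single i0 1 => one_ne_zero (Finsupp.single_eq_zero.mp hh.symm)), add_zero, if_pos rfl]
      have hsupp : (Finsupp.single i0 1) ∈ (X i0 + C (n:ℂ) : MvPolynomial (Fin N) ℂ).support := by
        rw [mem_support_iff, hco]; exact one_ne_zero
      have := le_totalDegree hsupp
      simpa using this
  have hmem : Real.log n ∈ candSet N K 0 := by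
    refine ⟨X i0 + C (n:ℂ), by rw [htd], by simp [h], ?_⟩
    rw [htd]
    simp
  have hlb := hb hmem
  have hn1 : (1:ℝ) < n := lt_of_le_of_lt (le_max_right _ _) hn
  have : b < Real.log n :=
    (Real.lt_log_iff_exp_lt (by linarith)).mpr (lt_of_le_of_lt (le_max_left _ _) hn)
  linarith

theorem statement12 (hN : 1 ≤ N) (K : Set (Fin N → ℂ)) (hK : IsCompact K)
    (hcirc : Circled N K) (hreg : Regular N K) :
    ∀ z : Fin N → ℂ, ((VK N K z : ℝ) : EReal) = max (robin N K z) 0 := by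
  intro z
  have hKne : K.Nonempty := K_nonempty N hN hreg
  set L := Filter.comap (fun l : ℂ => ‖l‖) Filter.atTop with hLdef
  haveI hLne : L.NeBot := by
    refine Filter.comap_neBot fun t ht => ?_
    obtain ⟨a, ha⟩ := Filter.mem_atTop_sets.mp ht
    exact ⟨((max a 0 : ℝ) : ℂ), by
      rw [Complex.norm_real, Real.norm_eq_abs, abs_of_nonneg (le_max_right a 0)]
      exact ha _ (le_max_left a 0)⟩
  have hT : Filter.Tendsto (fun l : ℂ => ‖l‖) L Filter.atTop := Filter.tendsto_comap
  have hVeq : ∀ w, VK N K w = max 0 (sSup (homCand N K w)) := VK_eq N hKne hcirc hreg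
  rcases Set.eq_empty_or_nonempty (homCand N K z) with hemp | hne
  · have hVz : VK N K z = 0 := by rw [hVeq z, hemp, Real.sSup_empty, max_self]
    have hbot : robin N K z = ⊥ := by
      rw [robin, ← hLdef]
      apply Filter.Tendsto.limsup_eq
      rw [EReal.tendsto_nhds_bot_iff_real]
      intro x
      filter_upwards [hT.eventually (Filter.eventually_ge_atTop (max 1 (Real.exp (1 - x))))]
        with l hl
      have h1 : (1:ℝ) ≤ ‖l‖ := le_trans (le_max_left _ _) hl
      have hl0 : l ≠ 0 := by
        intro h; rw [h] at h1; simp at h1; linarith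
      have hVl : VK N K (l • z) = 0 := by
        rw [hVeq, homCand_smul N hl0 z, hemp, Set.image_empty, Real.sSup_empty, max_self]
      have hxlog : 1 - x ≤ Real.log (‖l‖) :=
        (Real.le_log_iff_exp_le (by linarith)).mpr (le_trans (le_max_right _ _) hl)
      rw [hVl]
      have : (0 : ℝ) - Real.log (‖l‖) < x := by linarith
      exact_mod_cast this
    rw [hVz, hbot]
    simp
  · set S := sSup (homCand N K z) with hS
    have hlim : robin N K z = (S : EReal) := by
      rw [robin, ← hLdef]
      have hev : ∀ᶠ l : ℂ in L,
          ((VK N K (l • z) - Real.log (‖l‖) : ℝ) : EReal) = ((S : ℝ) : EReal) := by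
        filter_upwards [hT.eventually (Filter.eventually_ge_atTop (max 1 (Real.exp (-S))))]
          with l hl
        have h1 : (1:ℝ) ≤ ‖l‖ := le_trans (le_max_left _ _) hl
        have hl0 : l ≠ 0 := by
          intro h; rw [h] at h1; simp at h1; linarith
        have hlogS : -S ≤ Real.log (‖l‖) :=
          (Real.le_log_iff_exp_le (by linarith)).mpr (le_trans (le_max_right _ _) hl)
        have hbdd : BddAbove (homCand N K z) := (hreg.1 z).mono (homCand_subset N K z)
        have himg : sSup (homCand N K (l • z)) = S + Real.log (‖l‖) := by
          rw [homCand_smul N hl0 z, sSup_image_add _ hne hbdd]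
        have hV : VK N K (l • z) = S + Real.log (‖l‖) := by
          rw [hVeq, himg, max_eq_right (by linarith)]
        rw [hV]
        norm_num
      rw [Filter.limsup_congr hev]
      exact Filter.limsup_const _
    rw [hlim, hVeq z, ← hS]
    rcases le_total S 0 with h | h
    · rw [max_eq_left h]
      rw [max_eq_right (show (S : EReal) ≤ 0 by exact_mod_cast h)]
      simp
    · rw [max_eq_right h]
      rw [max_eq_left (show (0:EReal) ≤ (S : EReal) by exact_mod_cast h)]
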